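/- Let P be a random process on positive integers where from position m > 1 the particle moves to m - X with X ∈ {1,...,m-1}, X independent of the past, and E[X] ≥ g(m) for a monotone nondecreasing positive function g. Then the expected time T to reach position 1 from position n satisfies E[T] ≤ ∫_1^n dx / g(x). -/

import Mathlib

open MeasureTheory
open scoped ENNReal

/-- First time (in `ℝ≥0∞`, `⊤` if never) the time-indexed predicate `P` holds along `ω`. -/
noncomputable def hitTime {Ω : Type*} (P : ℕ → Ω → Prop) (ω : Ω) : ℝ≥0∞ :=
  sInf {r : ℝ≥0∞ | ∃ k : ℕ, r = (k : ℝ≥0∞) ∧ P k ω}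

/-- a particle starts at integer position `n ≥ 1`; from position `m > 1` it
jumps down by a random amount `X ∈ {1, …, m-1}` whose conditional expectation given the past
is at least `g(m)`, for a monotone nondecreasing positive function `g`; positions `≤ 1` are
absorbing. Then the expected time `T` to reach position `1` satisfies
`E[T] ≤ ∫_1^n dx / g(x)`. -/
theorem drift_hitting_time_bound {Ω : Type*} {mΩ : MeasurableSpace Ω}
    (μ : Measure Ω) [IsProbabilityMeasure μ]
    (g : ℝ → ℝ) (hg_mono : Monotone g) (hg_pos : ∀ x > 0, 0 < g x)
    (n : ℕ) (hn : 1 ≤ n)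
    (ℱ : Filtration ℕ mΩ)
    (Y : ℕ → Ω → ℕ)
    (hadapted : ∀ t, Measurable[ℱ t] (Y t))
    (hY0 : ∀ ω, Y 0 ω = n)
    (hjump : ∀ t ω, 1 < Y t ω → 1 ≤ Y (t + 1) ω ∧ Y (t + 1) ω < Y t ω)
    (habs : ∀ t ω, Y t ω ≤ 1 → Y (t + 1) ω = Y t ω)
    (hdrift : ∀ t, ∀ᵐ ω ∂μ, 1 < Y t ω →
      g (Y t ω) ≤ (μ[fun ω' => (Y t ω' : ℝ) - (Y (t + 1) ω' : ℝ) | ℱ t]) ω) :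
    ∫⁻ ω, hitTime (fun t ω => Y t ω = 1) ω ∂μ ≤
      ENNReal.ofReal (∫ x in (1 : ℝ)..(n : ℝ), 1 / g x) := by
  classical
  set H : ℝ → ℝ := fun m => ∫ x in (1:ℝ)..m, 1 / g x with hHdef
  have hg1 : ∀ x : ℝ, 1 ≤ x → 0 < g x := fun x hx => hg_pos x (by linarith)
  -- interval integrability of 1/g on intervals in [1, ∞)
  have hii : ∀ a b : ℝ, 1 ≤ a → 1 ≤ b → IntervalIntegrable (fun x => 1 / g x) volume a b := by
    intro a b ha hb
    apply AntitoneOn.intervalIntegrable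
    intro x hx y hy hxy
    have h1x : (1:ℝ) ≤ x := le_trans (le_min ha hb) hx.1
    exact one_div_le_one_div_of_le (hg1 x h1x) (hg_mono hxy)
  have hHdiff : ∀ a b : ℝ, 1 ≤ a → a ≤ b → H b - H a = ∫ x in a..b, 1 / g x := by
    intro a b ha hab
    exact intervalIntegral.integral_interval_sub_left (hii 1 b le_rfl (by linarith))
      (hii 1 a le_rfl ha)
  have hHlb : ∀ a b : ℝ, 1 ≤ a → a ≤ b → (b - a) / g b ≤ H b - H a := by
    intro a b ha hab
    rw [hHdiff a b ha hab]
    have h1 : ∫ x in a..b, (1 / g b) ≤ ∫ x in a..b, 1 / g x := by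
      apply intervalIntegral.integral_mono_on hab (intervalIntegrable_const) (hii a b ha (by linarith))
      intro x hx
      exact one_div_le_one_div_of_le (hg1 x (le_trans ha hx.1)) (hg_mono hx.2)
    have h2 : ∫ x in a..b, (1 / g b) = (b - a) / g b := by
      rw [intervalIntegral.integral_const, smul_eq_mul]; ring
    linarith
  have hHnonneg : ∀ a : ℝ, 1 ≤ a → 0 ≤ H a := by
    intro a ha
    exact intervalIntegral.integral_nonneg ha
      (fun u hu => le_of_lt (div_pos one_pos (hg1 u hu.1)))
  have hHmono : ∀ a b : ℝ, 1 ≤ a → a ≤ b → H a ≤ H b := by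
    intro a b ha hab
    have := hHlb a b ha hab
    have hb : 0 < g b := hg1 b (by linarith)
    nlinarith [div_nonneg (by linarith : (0:ℝ) ≤ b - a) hb.le]
  -- basic facts about Y
  have hY1 : ∀ t ω, 1 ≤ Y t ω := by
    intro t
    induction t with
    | zero => intro ω; rw [hY0 ω]; exact hn
    | succ t ih =>
      intro ω
      by_cases h : 1 < Y t ω
      · exact (hjump t ω h).1
      · rw [habs t ω (by omega)]; exact ih ω
  have hYle : ∀ t ω, Y (t+1) ω ≤ Y t ω := by
    intro t ω
    by_cases h : 1 < Y t ω
    · exact le_of_lt (hjump t ω h).2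
    · rw [habs t ω (by omega)]
  have hYn : ∀ t ω, Y t ω ≤ n := by
    intro t
    induction t with
    | zero => intro ω; rw [hY0 ω]
    | succ t ih => intro ω; exact le_trans (hYle t ω) (ih ω)
  have habs' : ∀ s t ω, Y s ω = 1 → s ≤ t → Y t ω = 1 := by
    have aux : ∀ k s ω, Y s ω = 1 → Y (s + k) ω = 1 := by
      intro k
      induction k with
      | zero => intro s ω h; simpa using h
      | succ k ih =>
        intro s ω h
        have hk := ih s ω h
        have : s + (k + 1) = (s + k) + 1 := by ring
        rw [this, habs _ ω (le_of_eq hk), hk]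
    intro s t ω h1 hst
    have := aux (t - s) s ω h1
    rwa [Nat.add_sub_cancel' hst] at this
  -- Y reaches 1 by time n - 1
  have hclaim : ∀ t ω, Y t ω = 1 ∨ Y t ω + t ≤ n := by
    intro t
    induction t with
    | zero => intro ω; right; rw [hY0 ω]; omega
    | succ t ih =>
      intro ω
      rcases ih ω with h | h
      · left; exact habs' t (t+1) ω h (by omega)
      · by_cases h1 : 1 < Y t ω
        · right; have := (hjump t ω h1).2; omega
        · left
          have : Y t ω = 1 := by have := hY1 t ω; omega
          exact habs' t (t+1) ω this (by omega)
  have hreach : ∀ ω, Y (n-1) ω = 1 := by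
    intro ω
    rcases hclaim (n-1) ω with h | h
    · exact h
    · have := hY1 (n-1) ω; omega
  have hex : ∀ ω, ∃ k, Y k ω = 1 := fun ω => ⟨n-1, hreach ω⟩
  set τ : Ω → ℕ := fun ω => Nat.find (hex ω) with hτdef
  have hτ_spec : ∀ ω, Y (τ ω) ω = 1 := fun ω => Nat.find_spec (hex ω)
  have hτ_le : ∀ ω, τ ω ≤ n - 1 := fun ω => Nat.find_le (hreach ω)
  have hτ_lt : ∀ t ω, t < τ ω ↔ 1 < Y t ω := by
    intro t ω
    constructor
    · intro h
      have := Nat.find_min (hex ω) h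
      have := hY1 t ω
      omega
    · intro h
      by_contra hc
      have hle : τ ω ≤ t := by omega
      have := habs' (τ ω) t ω (hτ_spec ω) hle
      omega
  -- hitTime equals τ
  have hhit : ∀ ω, hitTime (fun t ω => Y t ω = 1) ω = (τ ω : ℝ≥0∞) := by
    intro ω
    apply le_antisymm
    · exact sInf_le ⟨τ ω, rfl, hτ_spec ω⟩
    · apply le_sInf
      rintro r ⟨k, rfl, hk⟩
      have hk' : τ ω ≤ k := Nat.find_le hk
      exact Nat.cast_le.mpr hk'
  -- measurability
  have hYmeas : ∀ t, Measurable (Y t) := fun t => (hadapted t).mono (ℱ.le t) le_rfl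
  have hSmeas : ∀ t, MeasurableSet {ω | 1 < Y t ω} := by
    intro t
    exact hYmeas t (measurableSet_Ioi (a := 1))
  -- integrability of compositions
  have hInt : ∀ (f : ℕ → ℝ) (t : ℕ), Integrable (fun ω => f (Y t ω)) μ := by
    intro f t
    have hm : Measurable (fun ω => f (Y t ω)) := measurable_from_top.comp (hYmeas t)
    have hb : ∀ ω, ‖f (Y t ω)‖ ≤ ∑ k ∈ Finset.range (n+1), ‖f k‖ := by
      intro ω
      exact Finset.single_le_sum (f := fun k => ‖f k‖) (fun k _ => norm_nonneg _)
        (Finset.mem_range.mpr (Nat.lt_succ_of_le (hYn t ω)))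
    exact (integrable_const _).mono' hm.aestronglyMeasurable (Filter.Eventually.of_forall hb)
  -- rewrite the lintegral as a sum of measures
  have hτsum : ∀ ω, (τ ω : ℝ≥0∞) =
      ∑ t ∈ Finset.range (n-1), Set.indicator {ω' | 1 < Y t ω'} (fun _ => (1:ℝ≥0∞)) ω := by
    intro ω
    have h1 : ∀ t, Set.indicator {ω' | 1 < Y t ω'} (fun _ => (1:ℝ≥0∞)) ω
        = if t < τ ω then 1 else 0 := by
      intro t
      by_cases h : 1 < Y t ω
      · simp [Set.indicator, h, (hτ_lt t ω).mpr h]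
      · have h' : ¬ t < τ ω := fun hc => h ((hτ_lt t ω).mp hc)
        simp [Set.indicator, h, h']
    rw [Finset.sum_congr rfl (fun t _ => h1 t), ← Finset.sum_filter]
    have h2 : (Finset.range (n-1)).filter (fun t => t < τ ω) = Finset.range (τ ω) := by
      ext t
      simp only [Finset.mem_filter, Finset.mem_range]
      have := hτ_le ω
      omega
    rw [h2]
    simp
  have hlhs : ∫⁻ ω, hitTime (fun t ω => Y t ω = 1) ω ∂μ
      = ∑ t ∈ Finset.range (n-1), μ {ω | 1 < Y t ω} := by
    calc ∫⁻ ω, hitTime (fun t ω => Y t ω = 1) ω ∂μ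
        = ∫⁻ ω, ∑ t ∈ Finset.range (n-1),
            Set.indicator {ω' | 1 < Y t ω'} (fun _ => (1:ℝ≥0∞)) ω ∂μ := by
          congr 1; funext ω; rw [hhit ω, hτsum ω]
      _ = ∑ t ∈ Finset.range (n-1),
            ∫⁻ ω, Set.indicator {ω' | 1 < Y t ω'} (fun _ => (1:ℝ≥0∞)) ω ∂μ := by
          apply lintegral_finset_sum
          intro t _
          exact (measurable_const.indicator (hSmeas t))
      _ = ∑ t ∈ Finset.range (n-1), μ {ω | 1 < Y t ω} := by
          apply Finset.sum_congr rfl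
          intro t _
          exact lintegral_indicator_one (hSmeas t)
  -- the per-step drift inequality
  have key : ∀ t, (μ {ω | 1 < Y t ω}).toReal
      ≤ (∫ ω, H (Y t ω) ∂μ) - ∫ ω, H (Y (t+1) ω) ∂μ := by
    intro t
    set S : Set Ω := {ω | 1 < Y t ω} with hSdef
    set A : ℕ → Set Ω := fun m => {ω | Y t ω = m} with hAdef
    set D : Ω → ℝ := fun ω => H (Y t ω) - H (Y (t+1) ω) with hDdef
    have hD_int : Integrable D μ := (hInt (fun k => H k) t).sub (hInt (fun k => H k) (t+1))
    have hD_nonneg : ∀ ω, 0 ≤ D ω := by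
      intro ω
      have h1 : (1:ℝ) ≤ (Y (t+1) ω : ℝ) := by exact_mod_cast hY1 (t+1) ω
      have h2 : ((Y (t+1) ω : ℝ)) ≤ (Y t ω : ℝ) := by exact_mod_cast hYle t ω
      have := hHmono _ _ h1 h2
      simp only [hDdef]; linarith
    have hAF : ∀ m, MeasurableSet[ℱ t] (A m) := fun m =>
      hadapted t (measurableSet_singleton m)
    have hA : ∀ m, MeasurableSet (A m) := fun m => ℱ.le t _ (hAF m)
    -- per atom
    have hatom : ∀ m : ℕ, 2 ≤ m → (μ (A m)).toReal ≤ ∫ ω in A m, D ω ∂μ := by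
      intro m hm
      have hm1 : (1:ℝ) ≤ (m:ℝ) := by exact_mod_cast Nat.one_le_of_lt hm
      have hgm : 0 < g m := hg1 m hm1
      have hXint : Integrable (fun ω => (Y t ω : ℝ) - (Y (t+1) ω : ℝ)) μ :=
        (hInt (fun k => (k:ℝ)) t).sub (hInt (fun k => (k:ℝ)) (t+1))
      -- conditional expectation step
      have h1 : g m * (μ (A m)).toReal ≤ ∫ ω in A m, ((Y t ω : ℝ) - (Y (t+1) ω : ℝ)) ∂μ := by
        rw [← setIntegral_condExp (ℱ.le t) hXint (hAF m)]
        have hmono : ∫ ω in A m, g m ∂μ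
            ≤ ∫ ω in A m, (μ[fun ω' => (Y t ω' : ℝ) - (Y (t + 1) ω' : ℝ) | ℱ t]) ω ∂μ := by
          apply setIntegral_mono_ae_restrict (integrable_const _).restrict
            integrable_condExp.restrict
          rw [Filter.EventuallyLE, ae_restrict_iff' (hA m)]
          filter_upwards [hdrift t] with ω hω hmem
          have hYm : Y t ω = m := hmem
          have h2 : 1 < Y t ω := by omega
          have := hω h2
          rw [hYm] at this
          exact this
        calc g m * (μ (A m)).toReal = ∫ ω in A m, g m ∂μ := by
              rw [setIntegral_const, smul_eq_mul, mul_comm, Measure.real]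
          _ ≤ _ := hmono
      -- pointwise comparison step
      have h2 : ∫ ω in A m, ((Y t ω : ℝ) - (Y (t+1) ω : ℝ)) ∂μ
          ≤ ∫ ω in A m, g m * D ω ∂μ := by
        apply setIntegral_mono_on hXint.integrableOn (hD_int.const_mul _).integrableOn (hA m)
        intro ω hω
        have hYm : Y t ω = m := hω
        have ha1 : (1:ℝ) ≤ (Y (t+1) ω : ℝ) := by exact_mod_cast hY1 (t+1) ω
        have hab : ((Y (t+1) ω : ℝ)) ≤ (m:ℝ) := by
          exact_mod_cast (hYle t ω).trans_eq hYm
        have hlb := hHlb _ _ ha1 hab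
        have hD : D ω = H m - H (Y (t+1) ω) := by simp only [hDdef, hYm]
        rw [div_le_iff₀ hgm] at hlb
        rw [hYm, hD]
        nlinarith
      have h3 : ∫ ω in A m, g m * D ω ∂μ = g m * ∫ ω in A m, D ω ∂μ := by
        simpa [smul_eq_mul] using integral_smul (μ := μ.restrict (A m)) (g m) D
      have := h1.trans (h2.trans_eq h3)
      exact le_of_mul_le_mul_left this hgm
    -- sum over atoms
    have hcover : S = ⋃ m ∈ Finset.Icc 2 n, A m := by
      ext ω
      simp only [hSdef, hAdef, Set.mem_setOf_eq, Set.mem_iUnion, Finset.mem_Icc]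
      constructor
      · intro h
        exact ⟨Y t ω, ⟨⟨by omega, hYn t ω⟩, rfl⟩⟩
      · rintro ⟨m, ⟨⟨h2, _⟩, rfl⟩⟩
        omega
    have hdisj : (↑(Finset.Icc 2 n) : Set ℕ).PairwiseDisjoint A := by
      intro a _ b _ hab
      simp only [Function.onFun, Set.disjoint_left]
      intro ω h1 h2
      exact hab (h1.symm.trans h2)
    have hmeasS : μ S = ∑ m ∈ Finset.Icc 2 n, μ (A m) := by
      rw [hcover]
      exact measure_biUnion_finset hdisj (fun m _ => hA m)
    have hSsum : (μ S).toReal = ∑ m ∈ Finset.Icc 2 n, (μ (A m)).toReal := by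
      rw [hmeasS]
      exact ENNReal.toReal_sum (fun m _ => measure_ne_top μ _)
    have hIsum : ∫ ω in S, D ω ∂μ = ∑ m ∈ Finset.Icc 2 n, ∫ ω in A m, D ω ∂μ := by
      rw [hcover]
      exact integral_biUnion_finset _ (fun m _ => hA m) hdisj
        (fun m _ => hD_int.integrableOn)
    have hstep : (μ S).toReal ≤ ∫ ω, D ω ∂μ := by
      calc (μ S).toReal = ∑ m ∈ Finset.Icc 2 n, (μ (A m)).toReal := hSsum
        _ ≤ ∑ m ∈ Finset.Icc 2 n, ∫ ω in A m, D ω ∂μ := by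
            apply Finset.sum_le_sum
            intro m hmem
            exact hatom m (Finset.mem_Icc.mp hmem).1
        _ = ∫ ω in S, D ω ∂μ := hIsum.symm
        _ ≤ ∫ ω, D ω ∂μ :=
            setIntegral_le_integral hD_int (Filter.Eventually.of_forall hD_nonneg)
    have hsplit : ∫ ω, D ω ∂μ = (∫ ω, H (Y t ω) ∂μ) - ∫ ω, H (Y (t+1) ω) ∂μ :=
      integral_sub (hInt (fun k => H k) t) (hInt (fun k => H k) (t+1))
    rw [← hsplit]
    exact hstep
  -- assemble
  rw [hlhs]
  have hfin : ∀ t, μ {ω | 1 < Y t ω} ≠ ⊤ := fun t => measure_ne_top μ _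
  have hsum_eq : ∑ t ∈ Finset.range (n-1), μ {ω | 1 < Y t ω}
      = ENNReal.ofReal (∑ t ∈ Finset.range (n-1), (μ {ω | 1 < Y t ω}).toReal) := by
    rw [ENNReal.ofReal_sum_of_nonneg (fun t _ => ENNReal.toReal_nonneg)]
    exact Finset.sum_congr rfl (fun t _ => (ENNReal.ofReal_toReal (hfin t)).symm)
  rw [hsum_eq]
  apply ENNReal.ofReal_le_ofReal
  have htel : ∑ t ∈ Finset.range (n-1), ((∫ ω, H (Y t ω) ∂μ) - ∫ ω, H (Y (t+1) ω) ∂μ)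
      = (∫ ω, H (Y 0 ω) ∂μ) - ∫ ω, H (Y (n-1) ω) ∂μ :=
    Finset.sum_range_sub' (fun t => ∫ ω, H (Y t ω) ∂μ) (n-1)
  have h0 : ∫ ω, H (Y 0 ω) ∂μ = H n := by
    simp only [hY0]
    simp [integral_const]
  have hend : 0 ≤ ∫ ω, H (Y (n-1) ω) ∂μ := by
    apply integral_nonneg
    intro ω
    exact hHnonneg _ (by exact_mod_cast hY1 (n-1) ω)
  calc ∑ t ∈ Finset.range (n-1), (μ {ω | 1 < Y t ω}).toReal
      ≤ ∑ t ∈ Finset.range (n-1), ((∫ ω, H (Y t ω) ∂μ) - ∫ ω, H (Y (t+1) ω) ∂μ) :=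
        Finset.sum_le_sum (fun t _ => key t)
    _ = (∫ ω, H (Y 0 ω) ∂μ) - ∫ ω, H (Y (n-1) ω) ∂μ := htel
    _ ≤ H n := by rw [h0]; linarith
    _ = ∫ x in (1:ℝ)..(n:ℝ), 1 / g x := rfl
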